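/- For all fixed real x, y, the rescaled dot product of layer-normalized linear embeddings satisfies lim_{c → ∞} [ c·LN(E_lin(x/c)) · c·LN(E_lin(y/c)) − 4c² ] = −2(x − y)²; equivalently, lim_{c → ∞} [ 4c²(c² + xy)/√((c² + x²)(c² + y²)) − 4c² ] = −2(x − y)². -/

import Mathlib

/-- Population mean of a vector `v ∈ ℝ^d`: `μ(v) = (1/d)·Σᵢ vᵢ`. -/
noncomputable def popMean {d : ℕ} (v : Fin d → ℝ) : ℝ := (∑ i, v i) / d

/-- Population standard deviation of a vector `v ∈ ℝ^d`:
`σ(v) = √((1/d)·Σᵢ (vᵢ − μ(v))²)`. -/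
noncomputable def popStd {d : ℕ} (v : Fin d → ℝ) : ℝ :=
  Real.sqrt ((∑ i, (v i - popMean v) ^ 2) / d)

/-- LayerNorm with unit gain and zero bias: `LN(v) = (v − μ(v)·𝟙)/σ(v)`. -/
noncomputable def layerNorm {d : ℕ} (v : Fin d → ℝ) : Fin d → ℝ :=
  fun i => (v i - popMean v) / popStd v

/-- Linear positional embedding `E_lin(x) = (1, −1, x, −x)`. -/
noncomputable def Elin (x : ℝ) : Fin 4 → ℝ := ![1, -1, x, -x]

open Filter Real

noncomputable def gaux (x y : ℝ) (u : ℝ) : ℝ :=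
  -4 * (x - y) ^ 2 /
    (Real.sqrt ((1 + x ^ 2 * u) * (1 + y ^ 2 * u)) *
      ((1 + x * y * u) + Real.sqrt ((1 + x ^ 2 * u) * (1 + y ^ 2 * u))))

lemma gaux_cont (x y : ℝ) : ContinuousAt (gaux x y) 0 := by
  apply ContinuousAt.div
  · fun_prop
  · apply ContinuousAt.mul
    · exact (Real.continuous_sqrt.comp (by fun_prop)).continuousAt
    · exact ContinuousAt.add (by fun_prop) (Real.continuous_sqrt.comp (by fun_prop)).continuousAt
  · simp [Real.sqrt_one]

lemma key (x y : ℝ) :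
    Tendsto (fun c : ℝ =>
        4 * c ^ 2 * (c ^ 2 + x * y) / Real.sqrt ((c ^ 2 + x ^ 2) * (c ^ 2 + y ^ 2)) -
          4 * c ^ 2) atTop (nhds (-2 * (x - y) ^ 2)) := by
  have h1 : Tendsto (fun c : ℝ => 1 / c ^ 2) atTop (nhds 0) := by
    have h : Tendsto (fun c : ℝ => c ^ 2) atTop atTop := tendsto_pow_atTop (by norm_num)
    simp only [one_div]; exact h.inv_tendsto_atTop
  have h2 : Tendsto (fun c : ℝ => gaux x y (1 / c ^ 2)) atTop (nhds (gaux x y 0)) :=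
    (gaux_cont x y).tendsto.comp h1
  have hg0 : gaux x y 0 = -2 * (x - y) ^ 2 := by
    simp [gaux]
    ring
  rw [hg0] at h2
  refine h2.congr' ?_
  filter_upwards [eventually_ge_atTop (1 + |x| + |y|)] with c hc
  have hc0 : (0:ℝ) < c := lt_of_lt_of_le (by positivity) hc
  have hx2 : c ^ 2 + x ^ 2 > 0 := by positivity
  have hy2 : c ^ 2 + y ^ 2 > 0 := by positivity
  have hxy : c ^ 2 + x * y > 0 := by nlinarith [abs_nonneg x, abs_nonneg y, le_abs_self x, le_abs_self y, neg_abs_le x, neg_abs_le y, abs_mul x y]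
  set s := Real.sqrt ((c ^ 2 + x ^ 2) * (c ^ 2 + y ^ 2)) with hs
  have hs2 : s ^ 2 = (c ^ 2 + x ^ 2) * (c ^ 2 + y ^ 2) := Real.sq_sqrt (by positivity)
  have hspos : 0 < s := Real.sqrt_pos.2 (by positivity)
  have hinner : Real.sqrt ((1 + x ^ 2 * (1 / c ^ 2)) * (1 + y ^ 2 * (1 / c ^ 2))) = s / c ^ 2 := by
    have : (1 + x ^ 2 * (1 / c ^ 2)) * (1 + y ^ 2 * (1 / c ^ 2)) = (s / c ^ 2) ^ 2 := by
      rw [div_pow, hs2]; field_simp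
    rw [this, Real.sqrt_sq (by positivity)]
  rw [gaux, hinner]
  have hsum : 0 < c ^ 2 + x * y + s := by positivity
  have e1 : 4 * c ^ 2 * (c ^ 2 + x * y) / s - 4 * c ^ 2
      = -4 * c ^ 4 * (x - y) ^ 2 / (s * (c ^ 2 + x * y + s)) := by
    rw [div_sub' hspos.ne', div_eq_div_iff hspos.ne' (by positivity)]
    linear_combination (-(4 * c ^ 2 * s)) * hs2
  have h3 : 0 < 1 + x * y * (1 / c ^ 2) + s / c ^ 2 := by
    have h4 : 0 < (c ^ 2 + x * y) / c ^ 2 := div_pos hxy (by positivity)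
    have h5 : 1 + x * y * (1 / c ^ 2) = (c ^ 2 + x * y) / c ^ 2 := by field_simp
    have h6 : 0 < s / c ^ 2 := by positivity
    linarith
  rw [e1, div_eq_div_iff (mul_ne_zero (by positivity) h3.ne') (by positivity)]
  field_simp

lemma popMean_elin (z : ℝ) : popMean (Elin z) = 0 := by
  simp [popMean, Elin, Fin.sum_univ_four]

lemma popStd_elin (z : ℝ) : popStd (Elin z) = Real.sqrt ((2 + 2 * z ^ 2) / 4) := by
  unfold popStd
  rw [popMean_elin]
  congr 1
  simp [Elin, Fin.sum_univ_four]
  ring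

lemma sum_eq (x y c : ℝ) (hc : 0 < c) :
    (∑ i, (c * layerNorm (Elin (x / c)) i) * (c * layerNorm (Elin (y / c)) i))
      = 4 * c ^ 2 * (c ^ 2 + x * y) / Real.sqrt ((c ^ 2 + x ^ 2) * (c ^ 2 + y ^ 2)) := by
  set s := Real.sqrt ((c ^ 2 + x ^ 2) * (c ^ 2 + y ^ 2)) with hs
  have hs2 : s ^ 2 = (c ^ 2 + x ^ 2) * (c ^ 2 + y ^ 2) := Real.sq_sqrt (by positivity)
  have hspos : 0 < s := Real.sqrt_pos.2 (by positivity)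
  set σx := popStd (Elin (x / c)) with hσx
  set σy := popStd (Elin (y / c)) with hσy
  have hσxpos : 0 < σx := by
    rw [hσx, popStd_elin]; exact Real.sqrt_pos.2 (by positivity)
  have hσypos : 0 < σy := by
    rw [hσy, popStd_elin]; exact Real.sqrt_pos.2 (by positivity)
  have hprod : σx * σy = s / (2 * c ^ 2) := by
    rw [hσx, hσy, popStd_elin, popStd_elin, ← Real.sqrt_mul (by positivity)]
    have hsq : (s / (2 * c ^ 2)) ^ 2 = (2 + 2 * (x / c) ^ 2) / 4 * ((2 + 2 * (y / c) ^ 2) / 4) := by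
      rw [div_pow, hs2]
      field_simp
      ring
    rw [← hsq, Real.sqrt_sq (by positivity)]
  have hsum : (∑ i, (c * layerNorm (Elin (x / c)) i) * (c * layerNorm (Elin (y / c)) i))
      = (2 + 2 * (x / c) * (y / c)) * c ^ 2 / (σx * σy) := by
    rw [Fin.sum_univ_four]
    simp only [layerNorm, popMean_elin, sub_zero, ← hσx, ← hσy]
    simp only [Elin, Matrix.cons_val_zero, Matrix.cons_val_one, Matrix.head_cons,
      Matrix.cons_val_two, Matrix.tail_cons, Matrix.cons_val_three]
    field_simp
    ring
  rw [hsum, hprod, div_div_eq_mul_div, div_eq_div_iff hspos.ne' hspos.ne']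
  field_simp
  ring

/-- For all fixed real `x, y`, the rescaled dot product of layer-normalized
linear embeddings satisfies
`lim_{c → ∞} [ c·LN(E_lin(x/c)) · c·LN(E_lin(y/c)) − 4c² ] = −2(x − y)²`;
equivalently,
`lim_{c → ∞} [ 4c²(c² + xy)/√((c² + x²)(c² + y²)) − 4c² ] = −2(x − y)²`. -/
theorem elin_rescaled_dot_tendsto (x y : ℝ) :
    Filter.Tendsto
      (fun c : ℝ =>
        (∑ i, (c * layerNorm (Elin (x / c)) i) * (c * layerNorm (Elin (y / c)) i)) -
          4 * c ^ 2)
      Filter.atTop (nhds (-2 * (x - y) ^ 2)) ∧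
    Filter.Tendsto
      (fun c : ℝ =>
        4 * c ^ 2 * (c ^ 2 + x * y) / Real.sqrt ((c ^ 2 + x ^ 2) * (c ^ 2 + y ^ 2)) -
          4 * c ^ 2)
      Filter.atTop (nhds (-2 * (x - y) ^ 2)) := by
  refine ⟨?_, key x y⟩
  refine (key x y).congr' ?_
  filter_upwards [Filter.eventually_gt_atTop 0] with c hc
  rw [sum_eq x y c hc]
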